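/- arXiv:0905.2371 — 2 statements merged into one kernel-verified Lean document; each statement's English description precedes it below -/
import Mathlib

section
/- Let u be harmonic on A_r \ {z₀} (where z₀ ∈ A_r) such that u(z) − (1/2)log|z − z₀| extends harmonically to A_r. If two such functions u₁, u₂ have equal boundary values on both circles |z| = 1 and |z| = r, then u₁ = u₂ on A_r \ {z₀}. -/
open Complex Filter Topology Set

/-- A real-valued function on an open subset of `ℂ ≅ ℝ²` is harmonic if it is `C²`
and its Laplacian vanishes. -/
def HarmonicOn' (f : ℂ → ℝ) (s : Set ℂ) : Prop :=
  ContDiffOn ℝ 2 f s ∧ ∀ z ∈ s,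
    fderiv ℝ (fun w => fderiv ℝ f w 1) z 1 +
      fderiv ℝ (fun w => fderiv ℝ f w Complex.I) z Complex.I = 0

noncomputable def Qf : ℂ → ℝ := fun z => z.re^2 + z.im^2

lemma Qf_contDiff : ContDiff ℝ 2 Qf := by
  have h1 : ContDiff ℝ 2 fun z : ℂ => z.re := Complex.reCLM.contDiff
  have h2 : ContDiff ℝ 2 fun z : ℂ => z.im := Complex.imCLM.contDiff
  exact (h1.pow 2).add (h2.pow 2)

/-- Second derivative test at a local max. -/
lemma second_deriv_nonpos_aux {φ : ℝ → ℝ}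
    (hd : ∀ᶠ t in 𝓝 (0:ℝ), DifferentiableAt ℝ φ t)
    (hd2 : DifferentiableAt ℝ (deriv φ) 0)
    (hmax : IsLocalMax φ 0) : deriv (deriv φ) 0 ≤ 0 := by
  by_contra hpos
  push_neg at hpos
  have h0 : deriv φ 0 = 0 := hmax.deriv_eq_zero
  have hT := hd2.hasDerivAt
  rw [hasDerivAt_iff_tendsto_slope] at hT
  have hev : ∀ᶠ t in 𝓝[≠] (0:ℝ), 0 < slope (deriv φ) 0 t :=
    hT.eventually (eventually_gt_nhds hpos)
  have hev' : ∀ᶠ t in 𝓝[>] (0:ℝ), 0 < deriv φ t := by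
    have h1 : ∀ᶠ t in 𝓝[>] (0:ℝ), 0 < slope (deriv φ) 0 t :=
      nhdsWithin_mono 0 (fun t ht => (by simpa using ne_of_gt ht : t ∈ ({0}ᶜ : Set ℝ))) hev
    filter_upwards [h1, self_mem_nhdsWithin] with t h1 ht
    have ht' : (0:ℝ) < t := ht
    have hsl : slope (deriv φ) 0 t = deriv φ t / t := by
      rw [slope_def_field, h0]; ring
    rw [hsl] at h1
    have h2 := mul_pos h1 ht'
    rwa [div_mul_cancel₀ _ (ne_of_gt ht')] at h2
  obtain ⟨u, hu, hIoo⟩ := mem_nhdsGT_iff_exists_Ioo_subset.mp hev'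
  have hu' : (0:ℝ) < u := hu
  obtain ⟨δ, hδ, hball⟩ := Metric.eventually_nhds_iff.mp (hd.and hmax)
  set t₀ := min (u/2) (δ/2) with ht₀def
  have ht₀ : 0 < t₀ := lt_min (by linarith) (by linarith)
  have ht₀u : t₀ ≤ u/2 := min_le_left _ _
  have ht₀δ : t₀ ≤ δ/2 := min_le_right _ _
  have hsub : ∀ t ∈ Icc (0:ℝ) t₀, dist t 0 < δ := by
    intro t ht
    rw [Real.dist_eq, sub_zero, _root_.abs_of_nonneg ht.1]
    linarith [ht.2]
  have hmono : StrictMonoOn φ (Icc 0 t₀) := by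
    apply strictMonoOn_of_deriv_pos (convex_Icc 0 t₀)
    · intro t ht
      exact ((hball (hsub t ht)).1).continuousAt.continuousWithinAt
    · intro t ht
      rw [interior_Icc] at ht
      exact hIoo ⟨ht.1, by linarith [ht.2]⟩
  have h01 : φ 0 < φ t₀ := hmono ⟨le_refl 0, le_of_lt ht₀⟩ ⟨le_of_lt ht₀, le_refl t₀⟩ ht₀
  have h02 : φ t₀ ≤ φ 0 :=
    (hball (hsub t₀ ⟨le_of_lt ht₀, le_refl t₀⟩)).2
  linarith

lemma eval_fderiv_diffAt {A : Set ℂ} (hA : IsOpen A) {f : ℂ → ℝ}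
    (hf : ContDiffOn ℝ 2 f A) {z : ℂ} (hz : z ∈ A) (v : ℂ) :
    DifferentiableAt ℝ (fun w => fderiv ℝ f w v) z := by
  have h2 : ContDiffAt ℝ 2 f z := hf.contDiffAt (hA.mem_nhds hz)
  have h1 : ContDiffAt ℝ 1 (fderiv ℝ f) z := h2.fderiv_right (by norm_num)
  exact (ContinuousLinearMap.apply ℝ ℝ v).differentiableAt.comp z (h1.differentiableAt (by norm_num))

lemma line_hasDerivAt {A : Set ℂ} (hA : IsOpen A) {f : ℂ → ℝ}
    (hf : ContDiffOn ℝ 2 f A) {z v : ℂ} (t : ℝ) (ht : z + t • v ∈ A) :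
    HasDerivAt (fun s : ℝ => f (z + s • v)) (fderiv ℝ f (z + t • v) v) t := by
  have hd : DifferentiableAt ℝ f (z + t • v) :=
    (hf.contDiffAt (hA.mem_nhds ht)).differentiableAt (by norm_num)
  have hline : HasDerivAt (fun s : ℝ => z + s • v) v t := by
    simpa using ((hasDerivAt_id t).smul_const v).const_add z
  exact (hd.hasFDerivAt.comp_hasDerivAt t hline)

lemma secondLine {A : Set ℂ} (hA : IsOpen A) {f : ℂ → ℝ}
    (hf : ContDiffOn ℝ 2 f A) {z : ℂ} (hz : z ∈ A) (v : ℂ) :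
    (∀ᶠ t in 𝓝 (0:ℝ), DifferentiableAt ℝ (fun t : ℝ => f (z + t • v)) t) ∧
    DifferentiableAt ℝ (deriv (fun t : ℝ => f (z + t • v))) 0 ∧
    deriv (deriv (fun t : ℝ => f (z + t • v))) 0 = fderiv ℝ (fun w => fderiv ℝ f w v) z v := by
  set g : ℂ → ℝ := fun w => fderiv ℝ f w v with hg
  have hline_cont : Continuous (fun t : ℝ => z + t • v) := by continuity
  have hT : {t : ℝ | z + t • v ∈ A} ∈ 𝓝 (0:ℝ) := by
    have : IsOpen {t : ℝ | z + t • v ∈ A} := hA.preimage hline_cont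
    exact this.mem_nhds (by simpa using hz)
  have hderiv_eq : deriv (fun t : ℝ => f (z + t • v)) =ᶠ[𝓝 (0:ℝ)]
      (fun t => g (z + t • v)) := by
    filter_upwards [hT] with t ht
    exact (line_hasDerivAt hA hf t ht).deriv
  have hgd : DifferentiableAt ℝ g z := eval_fderiv_diffAt hA hf hz v
  have hline0 : HasDerivAt (fun t : ℝ => z + t • v) v 0 := by
    simpa using ((hasDerivAt_id (0:ℝ)).smul_const v).const_add z
  have hcomp : HasDerivAt (fun t : ℝ => g (z + t • v)) (fderiv ℝ g z v) 0 := by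
    have hgd' : HasFDerivAt g (fderiv ℝ g z) (z + (0:ℝ) • v) := by
      simpa using hgd.hasFDerivAt
    exact hgd'.comp_hasDerivAt 0 hline0
  refine ⟨?_, ?_, ?_⟩
  · filter_upwards [hT] with t ht
    exact (line_hasDerivAt hA hf t ht).differentiableAt
  · exact (hderiv_eq.differentiableAt_iff).mpr hcomp.differentiableAt
  · rw [hderiv_eq.deriv_eq]
    exact hcomp.deriv

lemma quad_second_deriv (a b c : ℝ) :
    deriv (deriv (fun t : ℝ => a + b*t + c*t^2)) 0 = 2*c := by
  have h1 : ∀ t : ℝ, HasDerivAt (fun t : ℝ => a + b*t + c*t^2) (b + c*(2*t)) t := by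
    intro t
    have hb : HasDerivAt (fun t : ℝ => a + b*t) b t := by
      simpa using ((hasDerivAt_id t).const_mul b).const_add a
    have hc : HasDerivAt (fun t : ℝ => c*t^2) (c*(2*t)) t := by
      simpa using (hasDerivAt_pow 2 t).const_mul c
    exact hb.add hc
  have hd1 : deriv (fun t : ℝ => a + b*t + c*t^2) = fun t => b + c*(2*t) :=
    funext fun t => (h1 t).deriv
  rw [hd1]
  have h2 : HasDerivAt (fun t : ℝ => b + c*(2*t)) (2*c) 0 := by
    have : HasDerivAt (fun t : ℝ => c*(2*t)) (c*2) 0 := by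
      simpa using ((hasDerivAt_id (0:ℝ)).const_mul 2).const_mul c
    simpa [mul_comm] using this.const_add b
  exact h2.deriv

lemma Qf_line (ε : ℝ) (z v : ℂ) : (fun t : ℝ => ε * Qf (z + t • v)) =
    fun t : ℝ => (ε * Qf z) + (ε * (2*(z.re*v.re + z.im*v.im)))*t + (ε * Qf v)*t^2 := by
  funext t
  simp only [Qf, Complex.add_re, Complex.add_im, Complex.real_smul, Complex.mul_re,
    Complex.mul_im, Complex.ofReal_re, Complex.ofReal_im]
  ring

lemma Qf_second (ε : ℝ) (z v : ℂ) :
    deriv (deriv (fun t : ℝ => ε * Qf (z + t • v))) 0 = 2 * (ε * Qf v) := by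
  rw [Qf_line]; exact quad_second_deriv _ _ _

lemma lap_add {A : Set ℂ} (hA : IsOpen A) {f g : ℂ → ℝ}
    (hf : ContDiffOn ℝ 2 f A) (hg : ContDiffOn ℝ 2 g A) {z : ℂ} (hz : z ∈ A) (v : ℂ)
    (hfd : DifferentiableAt ℝ (fun w => fderiv ℝ f w v) z)
    (hgd : DifferentiableAt ℝ (fun w => fderiv ℝ g w v) z) :
    fderiv ℝ (fun w => fderiv ℝ (fun y => f y + g y) w v) z v
      = fderiv ℝ (fun w => fderiv ℝ f w v) z v + fderiv ℝ (fun w => fderiv ℝ g w v) z v := by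
  have hev : (fun w => fderiv ℝ (fun y => f y + g y) w v)
      =ᶠ[𝓝 z] (fun w => fderiv ℝ f w v + fderiv ℝ g w v) := by
    filter_upwards [hA.mem_nhds hz] with w hw
    rw [fderiv_fun_add ((hf.contDiffAt (hA.mem_nhds hw)).differentiableAt (by norm_num))
      ((hg.contDiffAt (hA.mem_nhds hw)).differentiableAt (by norm_num))]
    rfl
  rw [hev.fderiv_eq, fderiv_fun_add hfd hgd]
  rfl

lemma lap_neg (f : ℂ → ℝ) (z v : ℂ) :
    fderiv ℝ (fun w => fderiv ℝ (fun y => -f y) w v) z v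
      = -(fderiv ℝ (fun w => fderiv ℝ f w v) z v) := by
  have : (fun w => fderiv ℝ (fun y => -f y) w v) = fun w => -(fderiv ℝ f w v) := by
    funext w; rw [fderiv_fun_neg]; rfl
  rw [this, fderiv_fun_neg]
  rfl

lemma max_principle (r : ℝ) (hr : 0 < r) (hr1 : r < 1) (h H : ℂ → ℝ)
    (hc2 : ContDiffOn ℝ 2 h {z : ℂ | r < ‖z‖ ∧ ‖z‖ < 1})
    (hlap : ∀ z ∈ {z : ℂ | r < ‖z‖ ∧ ‖z‖ < 1},
      fderiv ℝ (fun w => fderiv ℝ h w 1) z 1 +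
        fderiv ℝ (fun w => fderiv ℝ h w Complex.I) z Complex.I = 0)
    (hHh : ∀ z ∈ {z : ℂ | r < ‖z‖ ∧ ‖z‖ < 1}, H z = h z)
    (hcont : ContinuousOn H {z : ℂ | r ≤ ‖z‖ ∧ ‖z‖ ≤ 1})
    (hbd : ∀ z : ℂ, ‖z‖ = 1 ∨ ‖z‖ = r → H z = 0) :
    ∀ z ∈ {z : ℂ | r < ‖z‖ ∧ ‖z‖ < 1}, H z ≤ 0 := by
  set A : Set ℂ := {z : ℂ | r < ‖z‖ ∧ ‖z‖ < 1} with hAdef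
  set s : Set ℂ := {z : ℂ | r ≤ ‖z‖ ∧ ‖z‖ ≤ 1} with hsdef
  have hA : IsOpen A := by
    have : A = {z : ℂ | r < ‖z‖} ∩ {z : ℂ | ‖z‖ < 1} := rfl
    rw [this]
    exact (isOpen_lt continuous_const continuous_norm).inter
      (isOpen_lt continuous_norm continuous_const)
  have hAs : A ⊆ s := fun z hz => ⟨le_of_lt hz.1, le_of_lt hz.2⟩
  have hsc : IsCompact s := by
    have hclosed : IsClosed s := by
      have : s = (fun z : ℂ => ‖z‖) ⁻¹' (Icc r 1) := rfl
      rw [this]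
      exact isClosed_Icc.preimage continuous_norm
    have hbdd : Bornology.IsBounded s := by
      apply (Metric.isBounded_closedBall (x := (0:ℂ)) (r := 1)).subset
      intro z hz
      simpa [Complex.dist_eq] using hz.2
    exact Metric.isCompact_of_isClosed_isBounded hclosed hbdd
  intro z₁ hz₁
  have key : ∀ ε : ℝ, 0 < ε → H z₁ ≤ ε := by
    intro ε hε
    set G : ℂ → ℝ := fun z => H z + ε * Qf z with hGdef
    set F : ℂ → ℝ := fun z => h z + ε * Qf z with hFdef
    have hGc : ContinuousOn G s :=
      hcont.add ((continuous_const.mul Qf_contDiff.continuous).continuousOn)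
    obtain ⟨zm, hzms, hmax⟩ := hsc.exists_isMaxOn ⟨z₁, hAs hz₁⟩ hGc
    have hGmax : ∀ w ∈ s, G w ≤ G zm := hmax
    by_cases hin : zm ∈ A
    · exfalso
      have hFmax : ∀ᶠ w in 𝓝 zm, F w ≤ F zm := by
        filter_upwards [hA.mem_nhds hin] with w hw
        have h1 : F w = G w := by simp only [hFdef, hGdef, hHh w hw]
        have h2 : F zm = G zm := by simp only [hFdef, hGdef, hHh zm hin]
        rw [h1, h2]; exact hGmax w (hAs hw)
      have hFc2 : ContDiffOn ℝ 2 F A := hc2.add ((contDiff_const.mul Qf_contDiff).contDiffOn)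
      have hdir : ∀ v : ℂ, fderiv ℝ (fun w => fderiv ℝ F w v) zm v ≤ 0 := by
        intro v
        obtain ⟨hev, hd2, heq⟩ := secondLine hA hFc2 hin v
        have hφmax : IsLocalMax (fun t : ℝ => F (zm + t • v)) 0 := by
          have ht : Tendsto (fun t : ℝ => zm + t • v) (𝓝 0) (𝓝 zm) := by
            have hcont' : Continuous (fun t : ℝ => zm + t • v) := by continuity
            have h₂ : ContinuousAt (fun t : ℝ => zm + t • v) 0 := hcont'.continuousAt
            unfold ContinuousAt at h₂
            rwa [show (fun t : ℝ => zm + t • v) 0 = zm by simp] at h₂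
          have := ht.eventually hFmax
          filter_upwards [this] with t h1
          simpa using h1
        have := second_deriv_nonpos_aux hev hd2 hφmax
        rwa [heq] at this
      have hQc2 : ContDiffOn ℝ 2 (fun y => ε * Qf y) A :=
        (contDiff_const.mul Qf_contDiff).contDiffOn
      have hQlap : ∀ v : ℂ, fderiv ℝ (fun w => fderiv ℝ (fun y => ε * Qf y) w v) zm v
          = 2 * (ε * Qf v) := by
        intro v
        have := (secondLine isOpen_univ (f := fun y => ε * Qf y)
          ((contDiff_const.mul Qf_contDiff).contDiffOn) (mem_univ zm) v).2.2
        rw [← this]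
        exact Qf_second ε zm v
      have hsplit : ∀ v : ℂ, fderiv ℝ (fun w => fderiv ℝ F w v) zm v
          = fderiv ℝ (fun w => fderiv ℝ h w v) zm v + 2 * (ε * Qf v) := by
        intro v
        have := lap_add hA hc2 hQc2 hin v (eval_fderiv_diffAt hA hc2 hin v)
          (eval_fderiv_diffAt hA hQc2 hin v)
        rw [hFdef]
        rw [this, hQlap v]
      have h1 := hdir 1
      have hI := hdir Complex.I
      rw [hsplit 1] at h1
      rw [hsplit Complex.I] at hI
      have hQ1 : Qf 1 = 1 := by simp [Qf]
      have hQI : Qf Complex.I = 1 := by simp [Qf]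
      rw [hQ1] at h1
      rw [hQI] at hI
      have := hlap zm hin
      linarith
    · have hzbd : ‖zm‖ = 1 ∨ ‖zm‖ = r := by
        have h1 : r ≤ ‖zm‖ ∧ ‖zm‖ ≤ 1 := hzms
        by_contra hc
        push_neg at hc
        exact hin ⟨lt_of_le_of_ne h1.1 (Ne.symm hc.2), lt_of_le_of_ne h1.2 hc.1⟩
      have hQzm : Qf zm ≤ 1 := by
        have habs : ‖zm‖ ≤ 1 := hzms.2
        have hQeq : Qf zm = (‖zm‖)^2 := by
          rw [Complex.sq_norm, Complex.normSq_apply, Qf]; ring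
        rw [hQeq]
        nlinarith [norm_nonneg zm]
      have hGzm : G zm ≤ ε := by
        have : H zm = 0 := hbd zm hzbd
        simp only [hGdef, this, zero_add]
        nlinarith
      have hQz₁ : 0 ≤ Qf z₁ := by simp only [Qf]; positivity
      have : H z₁ ≤ G z₁ := by simp only [hGdef]; nlinarith
      linarith [hGmax z₁ (hAs hz₁)]
  by_contra hc
  push_neg at hc
  have := key (H z₁ / 2) (by linarith)
  linarith

lemma lap_zero_sub {A : Set ℂ} (hA : IsOpen A) {v₁ v₂ : ℂ → ℝ}
    (h1c2 : ContDiffOn ℝ 2 v₁ A) (h2c2 : ContDiffOn ℝ 2 v₂ A)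
    (hl1 : ∀ z ∈ A, fderiv ℝ (fun w => fderiv ℝ v₁ w 1) z 1 +
      fderiv ℝ (fun w => fderiv ℝ v₁ w Complex.I) z Complex.I = 0)
    (hl2 : ∀ z ∈ A, fderiv ℝ (fun w => fderiv ℝ v₂ w 1) z 1 +
      fderiv ℝ (fun w => fderiv ℝ v₂ w Complex.I) z Complex.I = 0) :
    ∀ z ∈ A, fderiv ℝ (fun w => fderiv ℝ (fun y => v₁ y + -v₂ y) w 1) z 1 +
      fderiv ℝ (fun w => fderiv ℝ (fun y => v₁ y + -v₂ y) w Complex.I) z Complex.I = 0 := by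
  intro z hz
  have e1 := lap_add hA h1c2 h2c2.neg hz 1 (eval_fderiv_diffAt hA h1c2 hz 1)
    (eval_fderiv_diffAt hA h2c2.neg hz 1)
  have eI := lap_add hA h1c2 h2c2.neg hz Complex.I (eval_fderiv_diffAt hA h1c2 hz Complex.I)
    (eval_fderiv_diffAt hA h2c2.neg hz Complex.I)
  rw [e1, eI, lap_neg v₂ z 1, lap_neg v₂ z Complex.I]
  linarith [hl1 z hz, hl2 z hz]

/-- Uniqueness of the Dirichlet problem on the annulus for harmonic functions with a
logarithmic singularity `(1/2) log|z - z₀|` at `z₀`: if two such functions have the same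
boundary values on both circles, they coincide. -/
theorem dirichlet_uniqueness_log_singularity (r : ℝ) (hr : 0 < r) (hr1 : r < 1)
    (z₀ : ℂ) (hz₀ : z₀ ∈ {z : ℂ | r < ‖z‖ ∧ ‖z‖ < 1})
    (u₁ u₂ : ℂ → ℝ)
    (h₁ : HarmonicOn' u₁ ({z : ℂ | r < ‖z‖ ∧ ‖z‖ < 1} \ {z₀}))
    (h₂ : HarmonicOn' u₂ ({z : ℂ | r < ‖z‖ ∧ ‖z‖ < 1} \ {z₀}))
    (v₁ v₂ : ℂ → ℝ)
    (hv₁ : HarmonicOn' v₁ {z : ℂ | r < ‖z‖ ∧ ‖z‖ < 1})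
    (hv₂ : HarmonicOn' v₂ {z : ℂ | r < ‖z‖ ∧ ‖z‖ < 1})
    (hu₁ : ∀ z ∈ {z : ℂ | r < ‖z‖ ∧ ‖z‖ < 1} \ {z₀},
      u₁ z = v₁ z + (1 / 2) * Real.log (‖z - z₀‖))
    (hu₂ : ∀ z ∈ {z : ℂ | r < ‖z‖ ∧ ‖z‖ < 1} \ {z₀},
      u₂ z = v₂ z + (1 / 2) * Real.log (‖z - z₀‖))
    (ub₁ ub₂ : ℂ → ℝ)
    (hc₁ : ContinuousOn ub₁ ({z : ℂ | r ≤ ‖z‖ ∧ ‖z‖ ≤ 1} \ {z₀}))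
    (hc₂ : ContinuousOn ub₂ ({z : ℂ | r ≤ ‖z‖ ∧ ‖z‖ ≤ 1} \ {z₀}))
    (he₁ : ∀ z ∈ {z : ℂ | r < ‖z‖ ∧ ‖z‖ < 1} \ {z₀}, ub₁ z = u₁ z)
    (he₂ : ∀ z ∈ {z : ℂ | r < ‖z‖ ∧ ‖z‖ < 1} \ {z₀}, ub₂ z = u₂ z)
    (hbd : ∀ z : ℂ, ‖z‖ = 1 ∨ ‖z‖ = r → ub₁ z = ub₂ z) :
    ∀ z ∈ {z : ℂ | r < ‖z‖ ∧ ‖z‖ < 1} \ {z₀}, u₁ z = u₂ z := by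
  classical
  set A : Set ℂ := {z : ℂ | r < ‖z‖ ∧ ‖z‖ < 1} with hAdef
  set s : Set ℂ := {z : ℂ | r ≤ ‖z‖ ∧ ‖z‖ ≤ 1} with hsdef
  have hA : IsOpen A := by
    have : A = {z : ℂ | r < ‖z‖} ∩ {z : ℂ | ‖z‖ < 1} := rfl
    rw [this]
    exact (isOpen_lt continuous_const continuous_norm).inter
      (isOpen_lt continuous_norm continuous_const)
  have hz₀A : z₀ ∈ A := hz₀
  set H : ℂ → ℝ := fun z => if z ∈ A then v₁ z + -v₂ z else ub₁ z - ub₂ z with hHdef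
  -- H agrees with ub₁ - ub₂ away from z₀
  have hH_eq : ∀ w ∈ s \ {z₀}, H w = ub₁ w - ub₂ w := by
    intro w hw
    by_cases hwA : w ∈ A
    · have hwm : w ∈ A \ {z₀} := ⟨hwA, hw.2⟩
      have e1 := hu₁ w hwm
      have e2 := hu₂ w hwm
      have e3 := he₁ w hwm
      have e4 := he₂ w hwm
      simp only [hHdef, if_pos hwA]
      rw [e3, e4, e1, e2]
      ring
    · simp only [hHdef, if_neg hwA]
  have hHcont : ContinuousOn H s := by
    intro z hzs
    by_cases hzA : z ∈ A
    · have hca : ContinuousAt (fun w => v₁ w + -v₂ w) z :=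
        ((hv₁.1.contDiffAt (hA.mem_nhds hzA)).continuousAt).add
          ((hv₂.1.contDiffAt (hA.mem_nhds hzA)).continuousAt.neg)
      have heq : (fun w => v₁ w + -v₂ w) =ᶠ[𝓝 z] H := by
        filter_upwards [hA.mem_nhds hzA] with w hw
        simp only [hHdef, if_pos hw]
      exact (hca.congr heq).continuousWithinAt
    · have hzz₀ : z ≠ z₀ := fun he => hzA (he ▸ hz₀A)
      have hzm : z ∈ s \ {z₀} := ⟨hzs, by simpa using hzz₀⟩
      have h1 : ContinuousWithinAt (fun w => ub₁ w - ub₂ w) (s \ {z₀}) z :=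
        (hc₁.sub hc₂) z hzm
      have h2 : ContinuousWithinAt H (s \ {z₀}) z :=
        h1.congr (fun y hy => hH_eq y hy) (hH_eq z hzm)
      apply h2.mono_of_mem_nhdsWithin
      have hnz : {z₀}ᶜ ∈ 𝓝 z := isOpen_compl_singleton.mem_nhds (by simpa using hzz₀)
      have : s \ {z₀} = s ∩ {z₀}ᶜ := rfl
      rw [this]
      exact Filter.inter_mem self_mem_nhdsWithin (mem_nhdsWithin_of_mem_nhds hnz)
  have hbd' : ∀ z : ℂ, ‖z‖ = 1 ∨ ‖z‖ = r → H z = 0 := by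
    intro z hz
    have hzA : z ∉ A := by
      rcases hz with h | h
      · intro hmem; exact absurd hmem.2 (by rw [h]; exact lt_irrefl 1)
      · intro hmem; exact absurd hmem.1 (by rw [h]; exact lt_irrefl r)
    simp only [hHdef, if_neg hzA]
    rw [hbd z hz]; ring
  have hHh : ∀ z ∈ A, H z = v₁ z + -v₂ z := by
    intro z hz; simp only [hHdef, if_pos hz]
  have hlap₁ := lap_zero_sub hA hv₁.1 hv₂.1 hv₁.2 hv₂.2
  have hlap₂ := lap_zero_sub hA hv₂.1 hv₁.1 hv₂.2 hv₁.2
  have hle := max_principle r hr hr1 (fun z => v₁ z + -v₂ z) H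
    (hv₁.1.add hv₂.1.neg) hlap₁ hHh hHcont hbd'
  have hge := max_principle r hr hr1 (fun z => v₂ z + -v₁ z) (fun z => -H z)
    (hv₂.1.add hv₁.1.neg) hlap₂
    (fun z hz => by show -H z = v₂ z + -v₁ z; rw [hHh z hz]; ring)
    hHcont.neg
    (fun z hz => by show -H z = 0; rw [hbd' z hz]; ring)
  intro z hz
  have hzA : z ∈ A := hz.1
  have h1 := hle z hzA
  have h2 : -H z ≤ 0 := hge z hzA
  have hH0 : H z = 0 := le_antisymm h1 (by linarith)
  have hH' : v₁ z + -v₂ z = 0 := by rw [← hHh z hzA]; exact hH0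
  have e1 := hu₁ z hz
  have e2 := hu₂ z hz
  rw [e1, e2]
  linarith
end

section
/- For r ∈ (0,1) and s ∈ (−1, 0), there exists m ∈ (−3, −2) satisfying m = 2h(r^{−2(m+2)}) − 1 − s, where h(z) = z ϑ₁'(z)/ϑ₁(z) is the logarithmic derivative of the annular Jacobi theta function. -/
open Complex

/-- The constant `C = ∏_{k=1}^∞ (1 - r^{2k})`. -/
noncomputable def thetaC (r : ℝ) : ℂ :=
  ∏' k : ℕ, (1 - (r : ℂ) ^ (2 * (k + 1)))

/-- The annular Jacobi theta function
`ϑ₁(z) = C (1 - 1/z) ∏_{k=1}^∞ (1 - r^{2k} z)(1 - r^{2k}/z)`. -/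
noncomputable def theta1 (r : ℝ) (z : ℂ) : ℂ :=
  thetaC r * (1 - 1 / z) *
    ∏' k : ℕ, ((1 - (r : ℂ) ^ (2 * (k + 1)) * z) * (1 - (r : ℂ) ^ (2 * (k + 1)) / z))

/-- The logarithmic derivative `h(z) = z ϑ₁'(z)/ϑ₁(z)`. -/
noncomputable def thetaH (r : ℝ) (z : ℂ) : ℂ :=
  z * deriv (theta1 r) z / theta1 r z

open Filter Set Topology

namespace ThetaFP

/-- Half plane domain where factors `1 - c*w` (0 < c ≤ b) behave. -/
def Wdom (b : ℝ) : Set ℂ := {w | b * w.re < 1}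

lemma isOpen_Wdom (b : ℝ) : IsOpen (Wdom b) :=
  isOpen_lt (continuous_const.mul Complex.continuous_re) continuous_const

lemma Wdom_mono {b b' : ℝ} (h0 : 0 ≤ b') (h : b' ≤ b) (hb : 0 < b) : Wdom b ⊆ Wdom b' := by
  intro w hw
  simp only [Wdom, mem_setOf_eq] at hw ⊢
  rcases le_or_gt 0 w.re with h1 | h1
  · nlinarith
  · nlinarith

lemma re_pos_factor {b c : ℝ} {w : ℂ} (hc : 0 < c) (hcb : c ≤ b) (hw : w ∈ Wdom b) :
    0 < (1 - (c : ℂ) * w).re := by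
  have hre : ((c : ℂ) * w).re = c * w.re := Complex.re_ofReal_mul _ _
  simp only [Wdom, mem_setOf_eq] at hw
  simp only [Complex.sub_re, Complex.one_re, hre]
  rcases le_or_gt 0 w.re with h1 | h1
  · nlinarith
  · nlinarith

lemma factor_ne_zero {b c : ℝ} {w : ℂ} (hc : 0 < c) (hcb : c ≤ b) (hw : w ∈ Wdom b) :
    (1 : ℂ) - (c : ℂ) * w ≠ 0 := by
  intro h
  have := re_pos_factor hc hcb hw
  rw [h] at this
  simp at this

lemma factor_mem_slitPlane {b c : ℝ} {w : ℂ} (hc : 0 < c) (hcb : c ≤ b) (hw : w ∈ Wdom b) :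
    (1 : ℂ) - (c : ℂ) * w ∈ Complex.slitPlane :=
  Or.inl (re_pos_factor hc hcb hw)

lemma norm_coeff_mul {c : ℝ} (hc : 0 ≤ c) (w : ℂ) : ‖(c:ℂ) * w‖ = c * ‖w‖ := by
  rw [norm_mul, Complex.norm_real, Real.norm_eq_abs, _root_.abs_of_nonneg hc]

/-- summability of the log series at any point. -/
lemma summable_log {a : ℕ → ℝ} (ha : ∀ k, 0 ≤ a k) (hsa : Summable a) (w : ℂ) :
    Summable fun k => Complex.log (1 - (a k : ℂ) * w) := by
  have h0 : Tendsto a atTop (𝓝 0) := hsa.tendsto_atTop_zero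
  have hev : ∀ᶠ k in atTop, a k * ‖w‖ ≤ 1/2 := by
    rcases eq_or_lt_of_le (norm_nonneg w) with hw | hw
    · filter_upwards with k; rw [← hw]; norm_num
    · have : Tendsto (fun k => a k * ‖w‖) atTop (𝓝 (0 * ‖w‖)) := h0.mul_const _
      rw [zero_mul] at this
      exact (this.eventually_le_const (by norm_num)).mono fun k hk => hk
  apply Summable.of_norm_bounded_eventually (g := fun k => 3/2 * (a k * ‖w‖))
  · exact ((hsa.mul_right ‖w‖).mul_left _)
  · rw [Nat.cofinite_eq_atTop]
    filter_upwards [hev] with k hk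
    have h1 : (1 : ℂ) - (a k : ℂ) * w = 1 + (-((a k : ℂ) * w)) := by ring
    rw [h1]
    have := Complex.norm_log_one_add_half_le_self (z := -((a k : ℂ) * w)) (by
      rw [norm_neg, norm_coeff_mul (ha k)]; exact hk)
    rw [norm_neg, norm_coeff_mul (ha k)] at this
    exact this

/-- The log-sum. -/
noncomputable def Gl (a : ℕ → ℝ) (w : ℂ) : ℂ := ∑' k, Complex.log (1 - (a k : ℂ) * w)

lemma tendstoLocallyUniformlyOn_Gl {a : ℕ → ℝ} {b : ℝ} (ha : ∀ k, 0 ≤ a k)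
    (hsa : Summable a) :
    TendstoLocallyUniformlyOn (fun N w => ∑ k ∈ Finset.range N, Complex.log (1 - (a k : ℂ) * w))
      (Gl a) atTop (Wdom b) := by
  rw [tendstoLocallyUniformlyOn_iff_forall_isCompact (isOpen_Wdom b)]
  intro K hK hKc
  obtain ⟨R0, hR0'⟩ := hKc.isBounded.exists_norm_le
  set R : ℝ := max R0 0 with hRdef
  have hR : ∀ x ∈ K, ‖x‖ ≤ R := fun x hx => le_trans (hR0' x hx) (le_max_left _ _)
  have hR0 : 0 ≤ R := le_max_right _ _
  have h0 : Tendsto a atTop (𝓝 0) := hsa.tendsto_atTop_zero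
  have hev : ∀ᶠ k in cofinite, ∀ x ∈ K, ‖Complex.log (1 - (a k : ℂ) * x)‖ ≤ 3/2 * (a k * R) := by
    rw [Nat.cofinite_eq_atTop]
    have : Tendsto (fun k => a k * R) atTop (𝓝 (0 * R)) := h0.mul_const _
    rw [zero_mul] at this
    filter_upwards [this.eventually_le_const (by norm_num : (0:ℝ) < 1/2)] with k hk x hx
    have hxa : a k * ‖x‖ ≤ a k * R := by
      have := hR x hx
      nlinarith [ha k]
    have h1 : (1 : ℂ) - (a k : ℂ) * x = 1 + (-((a k : ℂ) * x)) := by ring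
    rw [h1]
    have hb2 : ‖-((a k : ℂ) * x)‖ ≤ 1/2 := by
      rw [norm_neg, norm_coeff_mul (ha k)]; exact le_trans hxa hk
    have := Complex.norm_log_one_add_half_le_self hb2
    rw [norm_neg, norm_coeff_mul (ha k)] at this
    nlinarith
  have hu : Summable fun k => 3/2 * (a k * R) := (hsa.mul_right R).mul_left _
  have := tendstoUniformlyOn_tsum_of_cofinite_eventually hu hev
  intro v hv
  exact tendsto_finset_range.eventually (this v hv)

lemma Gl_diffOn {a : ℕ → ℝ} {b : ℝ} (hb : 0 < b) (ha : ∀ k, 0 < a k) (hab : ∀ k, a k ≤ b)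
    (hsa : Summable a) : DifferentiableOn ℂ (Gl a) (Wdom b) := by
  apply (tendstoLocallyUniformlyOn_Gl (fun k => (ha k).le) hsa).differentiableOn _
    (isOpen_Wdom b)
  filter_upwards with N
  apply DifferentiableOn.fun_sum
  intro k _
  apply DifferentiableOn.clog
  · exact (differentiableOn_const _).sub ((differentiable_const _).mul differentiable_id).differentiableOn
  · intro w hw
    exact factor_mem_slitPlane (ha k) (hab k) hw


/-- exp representation of the product over `1 - a k * w` on `Wdom b`. -/
lemma tprod_factor_eq_exp {a : ℕ → ℝ} {b : ℝ} (hb : 0 < b) (ha : ∀ k, 0 < a k)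
    (hab : ∀ k, a k ≤ b) (hsa : Summable a) {w : ℂ} (hw : w ∈ Wdom b) :
    (∏' k, (1 - (a k : ℂ) * w)) = Complex.exp (Gl a w) := by
  exact (Complex.cexp_tsum_eq_tprod (fun k => factor_ne_zero (ha k) (hab k) hw)
    (summable_log (fun k => (ha k).le) hsa w)).symm

lemma multipliable_factor {a : ℕ → ℝ} {b : ℝ} (hb : 0 < b) (ha : ∀ k, 0 < a k)
    (hab : ∀ k, a k ≤ b) (hsa : Summable a) {w : ℂ} (hw : w ∈ Wdom b) :
    Multipliable fun k => (1 - (a k : ℂ) * w) := by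
  exact Complex.multipliable_of_summable_log (summable_log (fun k => (ha k).le) hsa w)

/-- realness of `Gl` at real points of `Wdom`. -/
lemma Gl_ofReal {a : ℕ → ℝ} {b : ℝ} (hb : 0 < b) (ha : ∀ k, 0 < a k)
    (hab : ∀ k, a k ≤ b) {x : ℝ} (hx : (x : ℂ) ∈ Wdom b) :
    Gl a x = ((∑' k, Real.log (1 - a k * x) : ℝ) : ℂ) := by
  rw [Complex.ofReal_tsum]
  apply tsum_congr
  intro k
  have hpos : 0 < 1 - a k * x := by
    have := re_pos_factor (ha k) (hab k) hx
    simpa [Complex.re_ofReal_mul] using this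
  rw [Complex.ofReal_log hpos.le]
  norm_num

/-- The z-domain: z and 1/z both in `Wdom b`, z nonzero. -/
def Udom (b : ℝ) : Set ℂ := {z | z ≠ 0 ∧ z ∈ Wdom b ∧ z⁻¹ ∈ Wdom b}

lemma isOpen_Udom (b : ℝ) : IsOpen (Udom b) := by
  have h1 : IsOpen {z : ℂ | z ≠ 0} := isOpen_ne
  have h2 : ContinuousOn (fun z : ℂ => z⁻¹) {z : ℂ | z ≠ 0} :=
    continuousOn_inv₀.mono (fun z hz => hz)
  have h3 : IsOpen ({z : ℂ | z ≠ 0} ∩ (fun z : ℂ => z⁻¹) ⁻¹' Wdom b) :=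
    h2.isOpen_inter_preimage h1 (isOpen_Wdom b)
  have h4 : Udom b = ({z : ℂ | z ≠ 0} ∩ (fun z : ℂ => z⁻¹) ⁻¹' Wdom b) ∩ Wdom b := by
    ext z
    simp only [Udom, mem_setOf_eq, mem_inter_iff, mem_preimage]
    tauto
  rw [h4]
  exact h3.inter (isOpen_Wdom b)

lemma ofReal_mem_Udom {b : ℝ} (hb : 0 < b) {x : ℝ} (h1 : b < x) (h2 : b * x < 1) :
    (x : ℂ) ∈ Udom b := by
  have hx0 : 0 < x := lt_trans hb h1
  refine ⟨by exact_mod_cast hx0.ne', ?_, ?_⟩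
  · simpa [Wdom] using h2
  · have : ((x : ℂ))⁻¹ = ((x⁻¹ : ℝ) : ℂ) := by push_cast; ring
    rw [this]
    simp only [Wdom, mem_setOf_eq, Complex.ofReal_re]
    rw [mul_inv_lt_iff₀ hx0]
    linarith


lemma Udom_subset_Wdom (b : ℝ) : Udom b ⊆ Wdom b := fun _ hz => hz.2.1

/-- The double product. -/
noncomputable def Pprod (a : ℕ → ℝ) (z : ℂ) : ℂ :=
  ∏' k, ((1 - (a k : ℂ) * z) * (1 - (a k : ℂ) * z⁻¹))

lemma Pprod_eq_exp {a : ℕ → ℝ} {b : ℝ} (hb : 0 < b) (ha : ∀ k, 0 < a k)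
    (hab : ∀ k, a k ≤ b) (hsa : Summable a) {z : ℂ} (hz : z ∈ Udom b) :
    Pprod a z = Complex.exp (Gl a z + Gl a z⁻¹) := by
  unfold Pprod
  rw [Multipliable.tprod_mul (multipliable_factor hb ha hab hsa hz.2.1)
    (multipliable_factor hb ha hab hsa hz.2.2),
    tprod_factor_eq_exp hb ha hab hsa hz.2.1,
    tprod_factor_eq_exp hb ha hab hsa hz.2.2, ← Complex.exp_add]

lemma Pprod_ne_zero {a : ℕ → ℝ} {b : ℝ} (hb : 0 < b) (ha : ∀ k, 0 < a k)
    (hab : ∀ k, a k ≤ b) (hsa : Summable a) {z : ℂ} (hz : z ∈ Udom b) :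
    Pprod a z ≠ 0 := by
  rw [Pprod_eq_exp hb ha hab hsa hz]; exact Complex.exp_ne_zero _

lemma Pprod_diffOn {a : ℕ → ℝ} {b : ℝ} (hb : 0 < b) (ha : ∀ k, 0 < a k)
    (hab : ∀ k, a k ≤ b) (hsa : Summable a) :
    DifferentiableOn ℂ (Pprod a) (Udom b) := by
  have hG : DifferentiableOn ℂ (Gl a) (Wdom b) := Gl_diffOn hb ha hab hsa
  have h1 : DifferentiableOn ℂ (fun z => Gl a z) (Udom b) := hG.mono (Udom_subset_Wdom b)
  have h2 : DifferentiableOn ℂ (fun z => Gl a z⁻¹) (Udom b) := by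
    apply hG.comp (differentiableOn_inv.mono (fun z hz => hz.1))
    exact fun z hz => hz.2.2
  have h3 : DifferentiableOn ℂ (fun z => Complex.exp (Gl a z + Gl a z⁻¹)) (Udom b) :=
    (h1.add h2).cexp
  exact h3.congr (fun z hz => Pprod_eq_exp hb ha hab hsa hz)

lemma contOn_deriv_Pprod {a : ℕ → ℝ} {b : ℝ} (hb : 0 < b) (ha : ∀ k, 0 < a k)
    (hab : ∀ k, a k ≤ b) (hsa : Summable a) :
    ContinuousOn (deriv (Pprod a)) (Udom b) :=
  (((Pprod_diffOn hb ha hab hsa).analyticOnNhd (isOpen_Udom b)).deriv).continuousOn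

lemma Pprod_ofReal {a : ℕ → ℝ} {b : ℝ} (hb : 0 < b) (ha : ∀ k, 0 < a k)
    (hab : ∀ k, a k ≤ b) (hsa : Summable a) {x : ℝ} (hx : (x : ℂ) ∈ Udom b) :
    ∃ p : ℝ, Pprod a x = (p : ℂ) := by
  have hxinv : ((x : ℂ))⁻¹ = ((x⁻¹ : ℝ) : ℂ) := by push_cast; ring
  have h2 : ((x⁻¹ : ℝ) : ℂ) ∈ Wdom b := by rw [← hxinv]; exact hx.2.2
  rw [Pprod_eq_exp hb ha hab hsa hx, Gl_ofReal hb ha hab hx.2.1, hxinv,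
    Gl_ofReal hb ha hab h2]
  exact ⟨Real.exp ((∑' (k : ℕ), Real.log (1 - a k * x)) + ∑' (k : ℕ), Real.log (1 - a k * x⁻¹)),
    by rw [← Complex.ofReal_add, ← Complex.ofReal_exp]⟩


/-! ### Specialization to the theta function -/

/-- coefficient sequences: `Aseq r n k = r ^ (2(k+n)+2)`. -/
def Aseq (r : ℝ) (n : ℕ) : ℕ → ℝ := fun k => r ^ (2 * (k + n) + 2)

section R

variable {r : ℝ} (hr : 0 < r) (hr1 : r < 1)

lemma Aseq_cast (r : ℝ) (k : ℕ) : ((Aseq r 0 k : ℝ) : ℂ) = (r : ℂ) ^ (2 * (k + 1)) := by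
  show ((r ^ (2 * (k + 0) + 2) : ℝ) : ℂ) = _
  rw [Complex.ofReal_pow]
  congr 1
  all_goals omega

include hr in
lemma Aseq_pos (n k : ℕ) : 0 < Aseq r n k := pow_pos hr _

include hr hr1 in
lemma Aseq_le (n k : ℕ) : Aseq r n k ≤ r ^ (2 * n + 2) :=
  pow_le_pow_of_le_one hr.le hr1.le (by omega)

include hr hr1 in
lemma bpos (n : ℕ) : 0 < (r : ℝ) ^ (2 * n + 2) := pow_pos hr _

include hr hr1 in
lemma blt1 (n : ℕ) : (r : ℝ) ^ (2 * n + 2) < 1 := pow_lt_one₀ hr.le hr1 (by omega)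

include hr hr1 in
lemma Aseq_summable (n : ℕ) : Summable (Aseq r n) := by
  have h : ∀ k, Aseq r n k = (r ^ 2) ^ k * r ^ (2 * n + 2) := by
    intro k
    unfold Aseq
    rw [← pow_mul, ← pow_add]
    congr 1
    omega
  rw [funext h]
  apply Summable.mul_right
  apply summable_geometric_of_lt_one (by positivity)
  nlinarith

include hr hr1 in
lemma one_mem_Wdom : (1 : ℂ) ∈ Wdom (r ^ 2) := by
  simp only [Wdom, mem_setOf_eq, Complex.one_re, mul_one]
  nlinarith

include hr hr1 in
lemma thetaC_eq : thetaC r = Complex.exp (Gl (Aseq r 0) 1) := by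
  have h1 : thetaC r = ∏' k : ℕ, (1 - (Aseq r 0 k : ℂ) * 1) := by
    unfold thetaC
    apply tprod_congr
    intro k
    rw [mul_one, Aseq_cast]
  rw [h1]
  exact tprod_factor_eq_exp (bpos hr hr1 0) (fun k => Aseq_pos hr 0 k)
    (fun k => Aseq_le hr hr1 0 k) (Aseq_summable hr hr1 0) (one_mem_Wdom hr hr1)

include hr hr1 in
lemma thetaC_ne_zero : thetaC r ≠ 0 := by
  rw [thetaC_eq hr hr1]; exact Complex.exp_ne_zero _

include hr hr1 in
lemma thetaC_ofReal : ∃ c : ℝ, thetaC r = (c : ℂ) := by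
  rw [thetaC_eq hr hr1]
  have h1 : (1 : ℂ) = ((1 : ℝ) : ℂ) := by norm_num
  rw [h1, Gl_ofReal (bpos hr hr1 0) (fun k => Aseq_pos hr 0 k) (fun k => Aseq_le hr hr1 0 k)
    (h1 ▸ one_mem_Wdom hr hr1)]
  exact ⟨Real.exp _, by rw [← Complex.ofReal_exp]⟩

lemma theta1_eq : theta1 r = fun z => thetaC r * ((1 - z⁻¹) * Pprod (Aseq r 0) z) := by
  funext z
  unfold theta1 Pprod
  rw [← mul_assoc]
  congr 1
  · rw [one_div]
  · apply tprod_congr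
    intro k
    rw [Aseq_cast, div_eq_mul_inv]

include hr hr1 in
lemma theta1_diffOn : DifferentiableOn ℂ (theta1 r) (Udom (r ^ 2)) := by
  rw [theta1_eq]
  apply DifferentiableOn.const_mul
  apply DifferentiableOn.mul
  · exact (differentiableOn_const _).sub (differentiableOn_inv.mono (fun z hz => hz.1))
  · exact (Pprod_diffOn (bpos hr hr1 0) (fun k => Aseq_pos hr 0 k)
      (fun k => Aseq_le hr hr1 0 k) (Aseq_summable hr hr1 0)).congr (fun z hz => by
        congr 1 <;> simp [Aseq])


include hr hr1 in
lemma theta1_ne_zero {z : ℂ} (hz : z ∈ Udom (r ^ 2)) (hz1 : z ≠ 1) : theta1 r z ≠ 0 := by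
  rw [theta1_eq]
  apply mul_ne_zero (thetaC_ne_zero hr hr1)
  apply mul_ne_zero
  · intro h
    apply hz1
    have : z⁻¹ = 1 := (sub_eq_zero.mp h).symm
    rwa [inv_eq_one] at this
  · exact Pprod_ne_zero (bpos hr hr1 0) (fun k => Aseq_pos hr 0 k)
      (fun k => Aseq_le hr hr1 0 k) (Aseq_summable hr hr1 0) hz

include hr hr1 in
lemma Pprod0_diffAt {z : ℂ} (hz : z ∈ Udom (r ^ 2)) :
    DifferentiableAt ℂ (Pprod (Aseq r 0)) z :=
  ((Pprod_diffOn (bpos hr hr1 0) (fun k => Aseq_pos hr 0 k)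
    (fun k => Aseq_le hr hr1 0 k) (Aseq_summable hr hr1 0)).differentiableAt
      ((isOpen_Udom _).mem_nhds hz))

include hr hr1 in
lemma Pprod0_ne_zero {z : ℂ} (hz : z ∈ Udom (r ^ 2)) : Pprod (Aseq r 0) z ≠ 0 :=
  Pprod_ne_zero (bpos hr hr1 0) (fun k => Aseq_pos hr 0 k)
    (fun k => Aseq_le hr hr1 0 k) (Aseq_summable hr hr1 0) hz

include hr hr1 in
lemma thetaH_formula {z : ℂ} (hz : z ∈ Udom (r ^ 2)) (hz1 : z ≠ 1) :
    thetaH r z = 1 / (z - 1) + z * logDeriv (Pprod (Aseq r 0)) z := by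
  have hz0 : z ≠ 0 := hz.1
  have hfac : (1 : ℂ) - z⁻¹ ≠ 0 := by
    intro h
    apply hz1
    have : z⁻¹ = 1 := (sub_eq_zero.mp h).symm
    rwa [inv_eq_one] at this
  have hDfac : DifferentiableAt ℂ (fun w : ℂ => 1 - w⁻¹) z :=
    (differentiableAt_const _).sub (differentiableAt_inv hz0)
  have h0 : thetaH r z = z * logDeriv (theta1 r) z := by
    rw [thetaH, logDeriv_apply, mul_div_assoc]
  rw [h0, theta1_eq]
  rw [show (fun z => thetaC r * ((1 - z⁻¹) * Pprod (Aseq r 0) z))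
      = fun z => thetaC r * ((fun z => (1 - z⁻¹) * Pprod (Aseq r 0) z) z) from rfl]
  rw [logDeriv_const_mul z _ (thetaC_ne_zero hr hr1)]
  rw [logDeriv_mul z hfac (Pprod0_ne_zero hr hr1 hz) hDfac (Pprod0_diffAt hr hr1 hz)]
  have hd : deriv (fun w : ℂ => 1 - w⁻¹) z = (z ^ 2)⁻¹ := by
    have h : HasDerivAt (fun w : ℂ => 1 - w⁻¹) (-(-(z ^ 2)⁻¹)) z :=
      (hasDerivAt_inv hz0).const_sub 1
    rw [h.deriv]
    ring
  have h1 : logDeriv (fun w : ℂ => 1 - w⁻¹) z = (z ^ 2)⁻¹ / (1 - z⁻¹) := by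
    rw [logDeriv_apply, hd]
  rw [h1, mul_add]
  congr 1
  have hz1' : z - 1 ≠ 0 := sub_ne_zero.mpr hz1
  field_simp
  try ring
  try tauto

include hr hr1 in
lemma Gl_shift (w : ℂ) :
    Gl (Aseq r 0) w = Complex.log (1 - ((r ^ 2 : ℝ) : ℂ) * w) + Gl (Aseq r 1) w := by
  unfold Gl
  rw [Summable.tsum_eq_zero_add (summable_log (fun k => (Aseq_pos hr 0 k).le) (Aseq_summable hr hr1 0) w)]
  congr 1

include hr hr1 in
lemma Udom_sq_subset : Udom (r ^ 2) ⊆ Udom (r ^ (2 * 1 + 2)) := by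
  intro z hz
  have h4 : (0:ℝ) ≤ r ^ (2 * 1 + 2) := by positivity
  have h44 : r ^ (2 * 1 + 2) ≤ r ^ 2 := pow_le_pow_of_le_one hr.le hr1.le (by omega)
  exact ⟨hz.1, Wdom_mono h4 h44 (by positivity) hz.2.1, Wdom_mono h4 h44 (by positivity) hz.2.2⟩

include hr hr1 in
lemma Pprod_shift {z : ℂ} (hz : z ∈ Udom (r ^ 2)) :
    Pprod (Aseq r 0) z = (1 - ((r ^ 2 : ℝ) : ℂ) * z) *
      ((1 - ((r ^ 2 : ℝ) : ℂ) * z⁻¹) * Pprod (Aseq r 1) z) := by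
  have hsq : (0:ℝ) < r ^ 2 := by positivity
  have hle : ∀ k : ℕ, Aseq r 1 k ≤ r ^ (2 * 1 + 2) := fun k => Aseq_le hr hr1 1 k
  have hz' : z ∈ Udom (r ^ (2 * 1 + 2)) := Udom_sq_subset hr hr1 hz
  rw [Pprod_eq_exp (bpos hr hr1 0) (fun k => Aseq_pos hr 0 k)
    (fun k => Aseq_le hr hr1 0 k) (Aseq_summable hr hr1 0) hz,
    Pprod_eq_exp (bpos hr hr1 1) (fun k => Aseq_pos hr 1 k)
    hle (Aseq_summable hr hr1 1) hz',
    Gl_shift hr hr1 z, Gl_shift hr hr1 z⁻¹]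
  rw [show Complex.log (1 - ((r ^ 2 : ℝ) : ℂ) * z) + Gl (Aseq r 1) z +
      (Complex.log (1 - ((r ^ 2 : ℝ) : ℂ) * z⁻¹) + Gl (Aseq r 1) z⁻¹)
      = Complex.log (1 - ((r ^ 2 : ℝ) : ℂ) * z) + (Complex.log (1 - ((r ^ 2 : ℝ) : ℂ) * z⁻¹)
        + (Gl (Aseq r 1) z + Gl (Aseq r 1) z⁻¹)) from by ring]
  rw [Complex.exp_add, Complex.exp_add]
  rw [Complex.exp_log (factor_ne_zero hsq le_rfl hz.2.1),
    Complex.exp_log (factor_ne_zero hsq le_rfl hz.2.2)]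


include hr hr1 in
lemma Pprod1_diffAt {z : ℂ} (hz : z ∈ Udom (r ^ (2 * 1 + 2))) :
    DifferentiableAt ℂ (Pprod (Aseq r 1)) z :=
  ((Pprod_diffOn (bpos hr hr1 1) (fun k => Aseq_pos hr 1 k)
    (fun k => Aseq_le hr hr1 1 k) (Aseq_summable hr hr1 1)).differentiableAt
      ((isOpen_Udom _).mem_nhds hz))

include hr hr1 in
lemma Pprod1_ne_zero {z : ℂ} (hz : z ∈ Udom (r ^ (2 * 1 + 2))) : Pprod (Aseq r 1) z ≠ 0 :=
  Pprod_ne_zero (bpos hr hr1 1) (fun k => Aseq_pos hr 1 k)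
    (fun k => Aseq_le hr hr1 1 k) (Aseq_summable hr hr1 1) hz

include hr hr1 in
lemma thetaH_formula2 {z : ℂ} (hz : z ∈ Udom (r ^ 2)) (hz1 : z ≠ 1) :
    thetaH r z = 1 / (z - 1) - ((r ^ 2 : ℝ) : ℂ) * z / (1 - ((r ^ 2 : ℝ) : ℂ) * z)
      + ((r ^ 2 : ℝ) : ℂ) / (z - ((r ^ 2 : ℝ) : ℂ))
      + z * logDeriv (Pprod (Aseq r 1)) z := by
  set c : ℂ := ((r ^ 2 : ℝ) : ℂ) with hc
  have hsq : (0:ℝ) < r ^ 2 := by positivity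
  have hz0 : z ≠ 0 := hz.1
  have hu : (1 : ℂ) - c * z ≠ 0 := factor_ne_zero hsq le_rfl hz.2.1
  have hv : (1 : ℂ) - c * z⁻¹ ≠ 0 := factor_ne_zero hsq le_rfl hz.2.2
  have hzc : z - c ≠ 0 := by
    intro h
    apply hv
    have hzc' : z = c := by rwa [sub_eq_zero] at h
    rw [hzc', mul_inv_cancel₀]
    · ring
    · rw [← hzc']; exact hz0
  -- split the log derivative of Pprod A0
  have hev : Pprod (Aseq r 0) =ᶠ[𝓝 z] fun w => (1 - c * w) * ((1 - c * w⁻¹) * Pprod (Aseq r 1) w) :=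
    Filter.eventually_of_mem ((isOpen_Udom _).mem_nhds hz) (fun w hw => Pprod_shift hr hr1 hw)
  have hsplit : logDeriv (Pprod (Aseq r 0)) z
      = logDeriv (fun w => 1 - c * w) z + (logDeriv (fun w => 1 - c * w⁻¹) z
        + logDeriv (Pprod (Aseq r 1)) z) := by
    rw [logDeriv_apply, hev.deriv_eq, hev.self_of_nhds, ← logDeriv_apply]
    have hdu : DifferentiableAt ℂ (fun w : ℂ => 1 - c * w) z :=
      (differentiableAt_const _).sub ((differentiableAt_id).const_mul c)
    have hdv : DifferentiableAt ℂ (fun w : ℂ => 1 - c * w⁻¹) z :=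
      (differentiableAt_const _).sub ((differentiableAt_inv hz0).const_mul c)
    have hdP : DifferentiableAt ℂ (Pprod (Aseq r 1)) z :=
      Pprod1_diffAt hr hr1 (Udom_sq_subset hr hr1 hz)
    rw [logDeriv_mul (f := fun w => 1 - c * w)
      (g := fun w => (1 - c * w⁻¹) * Pprod (Aseq r 1) w) z hu
      (mul_ne_zero hv (Pprod1_ne_zero hr hr1 (Udom_sq_subset hr hr1 hz))) hdu (hdv.mul hdP),
      logDeriv_mul (f := fun w => 1 - c * w⁻¹) (g := Pprod (Aseq r 1)) z hv
      (Pprod1_ne_zero hr hr1 (Udom_sq_subset hr hr1 hz)) hdv hdP]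
  have hlu : logDeriv (fun w : ℂ => 1 - c * w) z = -c / (1 - c * z) := by
    have h : HasDerivAt (fun w : ℂ => 1 - c * w) (-(c * 1)) z :=
      ((hasDerivAt_id z).const_mul c).const_sub 1
    rw [logDeriv_apply, h.deriv]
    ring_nf
  have hlv : logDeriv (fun w : ℂ => 1 - c * w⁻¹) z = -(c * -(z ^ 2)⁻¹) / (1 - c * z⁻¹) := by
    have h : HasDerivAt (fun w : ℂ => 1 - c * w⁻¹) (-(c * -(z ^ 2)⁻¹)) z :=
      ((hasDerivAt_inv hz0).const_mul c).const_sub 1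
    rw [logDeriv_apply, h.deriv]
  rw [thetaH_formula hr hr1 hz hz1, hsplit, hlu, hlv]
  have e1 : z * (-c / (1 - c * z)) = -(c * z / (1 - c * z)) := by ring
  have e2 : z * (-(c * -(z ^ 2)⁻¹) / (1 - c * z⁻¹)) = c / (z - c) := by
    rw [mul_div_assoc'] at *
    rw [div_eq_div_iff hv hzc]
    field_simp
  rw [mul_add, mul_add, e1, e2]
  ring

/-- a complex differentiable function that is real on a real neighbourhood has real derivative. -/
lemma deriv_im_zero {f : ℂ → ℂ} {x : ℝ} (hf : DifferentiableAt ℂ f x)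
    (hreal : ∀ᶠ t : ℝ in 𝓝 x, (f t).im = 0) : (deriv f x).im = 0 := by
  have hg : HasDerivAt (fun t : ℝ => f t) (deriv f x) x := hf.hasDerivAt.comp_ofReal
  have hs := hasDerivAt_iff_tendsto_slope.1 hg
  have him : Tendsto (fun t => (slope (fun t : ℝ => f (t : ℂ)) x t).im) (𝓝[≠] x)
      (𝓝 (deriv f x).im) := (Complex.continuous_im.tendsto _).comp hs
  have hx0 : (f (x : ℂ)).im = 0 := hreal.self_of_nhds
  have hev : ∀ᶠ t in 𝓝[≠] x, (slope (fun t : ℝ => f (t : ℂ)) x t).im = 0 := by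
    filter_upwards [eventually_nhdsWithin_of_eventually_nhds hreal] with t ht
    rw [slope_def_module]
    rw [Complex.smul_im]
    simp [Complex.sub_im, ht, hx0]
  have h0 : Tendsto (fun _ : ℝ => (0 : ℝ)) (𝓝[≠] x) (𝓝 (deriv f x).im) :=
    him.congr' (hev.mono fun t ht => ht)
  exact tendsto_nhds_unique h0 tendsto_const_nhds


lemma eq_ofReal_of_im_zero {w : ℂ} (h : w.im = 0) : w = (w.re : ℂ) := by
  apply Complex.ext <;> simp [h]

include hr hr1 in
lemma mem_Udom_of_Ioo {x : ℝ} (hx : x ∈ Ioo (r ^ 2) 1) : (x : ℂ) ∈ Udom (r ^ 2) := by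
  apply ofReal_mem_Udom (by positivity) hx.1
  nlinarith [hx.1, hx.2, sq_nonneg r]

include hr hr1 in
lemma theta1_ofReal {x : ℝ} (hx : (x : ℂ) ∈ Udom (r ^ 2)) :
    ∃ t : ℝ, theta1 r x = (t : ℂ) := by
  obtain ⟨c, hc⟩ := thetaC_ofReal hr hr1
  obtain ⟨p, hp⟩ := Pprod_ofReal (bpos hr hr1 0) (fun k => Aseq_pos hr 0 k)
    (fun k => Aseq_le hr hr1 0 k) (Aseq_summable hr hr1 0) hx
  refine ⟨c * ((1 - x⁻¹) * p), ?_⟩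
  rw [theta1_eq]
  simp only []
  rw [hc, hp]
  push_cast
  ring

include hr hr1 in
lemma theta1_im_eventually {x : ℝ} (hx : (x : ℂ) ∈ Udom (r ^ 2)) :
    ∀ᶠ t : ℝ in 𝓝 x, (theta1 r t).im = 0 := by
  have hopen : IsOpen {t : ℝ | (t : ℂ) ∈ Udom (r ^ 2)} :=
    (isOpen_Udom _).preimage Complex.continuous_ofReal
  filter_upwards [hopen.mem_nhds hx] with t ht
  obtain ⟨u, hu⟩ := theta1_ofReal hr hr1 ht
  rw [hu]
  simp

include hr hr1 in
lemma thetaH_ofReal {x : ℝ} (hx : x ∈ Ioo (r ^ 2) 1) :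
    thetaH r x = (((thetaH r x).re : ℝ) : ℂ) := by
  have hxU := mem_Udom_of_Ioo hr hr1 hx
  have hD : (deriv (theta1 r) x).im = 0 :=
    deriv_im_zero ((theta1_diffOn hr hr1).differentiableAt ((isOpen_Udom _).mem_nhds hxU))
      (theta1_im_eventually hr hr1 hxU)
  obtain ⟨t, ht⟩ := theta1_ofReal hr hr1 hxU
  have hDe : deriv (theta1 r) x = ((deriv (theta1 r) (x : ℂ)).re : ℂ) := eq_ofReal_of_im_zero hD
  have : thetaH r x = ((x * (deriv (theta1 r) (x : ℂ)).re / t : ℝ) : ℂ) := by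
    rw [thetaH, ht, hDe]
    push_cast
    simp only [Complex.ofReal_re]
    try ring
  rw [this]
  norm_num


include hr hr1 in
lemma contOn_deriv_theta1 : ContinuousOn (deriv (theta1 r)) (Udom (r ^ 2)) :=
  (((theta1_diffOn hr hr1).analyticOnNhd (isOpen_Udom _)).deriv).continuousOn

include hr hr1 in
lemma thetaH_contOn : ContinuousOn (thetaH r) (Udom (r ^ 2) \ {1}) := by
  apply ContinuousOn.div
  · exact continuous_id.continuousOn.mul
      ((contOn_deriv_theta1 hr hr1).mono diff_subset)
  · exact (theta1_diffOn hr hr1).continuousOn.mono diff_subset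
  · intro z hz
    exact theta1_ne_zero hr hr1 hz.1 (by simpa using hz.2)

include hr hr1 in
lemma phi_contOn : ContinuousOn (fun x : ℝ => (thetaH r x).re) (Ioo (r ^ 2) 1) := by
  apply Complex.continuous_re.comp_continuousOn
  apply (thetaH_contOn hr hr1).comp Complex.continuous_ofReal.continuousOn
  intro x hx
  refine ⟨mem_Udom_of_Ioo hr hr1 hx, ?_⟩
  simp only [mem_singleton_iff]
  intro h
  have : x = 1 := by exact_mod_cast h
  exact absurd (this ▸ hx.2) (lt_irrefl _)

include hr hr1 in
lemma one_mem_Udom : (1 : ℂ) ∈ Udom (r ^ 2) := by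
  refine ⟨one_ne_zero, one_mem_Wdom hr hr1, ?_⟩
  rw [inv_one]
  exact one_mem_Wdom hr hr1

include hr hr1 in
lemma rsq_mem_Udom1 : ((r ^ 2 : ℝ) : ℂ) ∈ Udom (r ^ (2 * 1 + 2)) := by
  have he : r ^ (2 * 1 + 2) = r ^ 2 * r ^ 2 := by ring
  have h2 : (0:ℝ) < r ^ 2 := by positivity
  have h21 : r ^ 2 < 1 := pow_lt_one₀ hr.le hr1 (two_ne_zero)
  apply ofReal_mem_Udom (by positivity)
  · rw [he]; nlinarith
  · rw [he]; nlinarith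

/-- continuity of `z * logDeriv (Pprod a) z` at suitable points. -/
lemma zlogDeriv_contAt {a : ℕ → ℝ} {b : ℝ} (hb : 0 < b) (ha : ∀ k, 0 < a k)
    (hab : ∀ k, a k ≤ b) (hsa : Summable a) {z₀ : ℂ} (hz₀ : z₀ ∈ Udom b) :
    ContinuousAt (fun z : ℂ => z * logDeriv (Pprod a) z) z₀ := by
  simp only [logDeriv_apply]
  apply ContinuousAt.mul continuousAt_id
  apply ContinuousAt.div
  · exact (contOn_deriv_Pprod hb ha hab hsa).continuousAt ((isOpen_Udom _).mem_nhds hz₀)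
  · exact (Pprod_diffOn hb ha hab hsa).continuousOn.continuousAt ((isOpen_Udom _).mem_nhds hz₀)
  · exact Pprod_ne_zero hb ha hab hsa hz₀

include hr hr1 in
lemma tendsto_phi_one : Tendsto (fun x : ℝ => (thetaH r x).re) (𝓝[<] (1 : ℝ)) atBot := by
  -- the convergent part
  have hψc : ContinuousAt (fun x : ℝ => (((x : ℂ) * logDeriv (Pprod (Aseq r 0)) x).re)) 1 := by
    have h1 := zlogDeriv_contAt (bpos hr hr1 0) (fun k => Aseq_pos hr 0 k)
      (fun k => Aseq_le hr hr1 0 k) (Aseq_summable hr hr1 0)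
      (z₀ := ((1:ℝ) : ℂ)) (by simpa using one_mem_Udom hr hr1)
    exact Complex.continuous_re.continuousAt.comp
      (h1.comp Complex.continuous_ofReal.continuousAt)
  have hψ : Tendsto (fun x : ℝ => (((x : ℂ) * logDeriv (Pprod (Aseq r 0)) x).re)) (𝓝[<] (1:ℝ))
      (𝓝 ((((1 : ℝ) : ℂ) * logDeriv (Pprod (Aseq r 0)) ((1:ℝ) : ℂ)).re)) :=
    hψc.tendsto.mono_left nhdsWithin_le_nhds
  -- the divergent part
  have h1 : Tendsto (fun x : ℝ => 1 - x) (𝓝[<] (1:ℝ)) (𝓝[>] (0:ℝ)) := by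
    rw [tendsto_nhdsWithin_iff]
    constructor
    · have hcont : Continuous fun x : ℝ => 1 - x := continuous_const.sub continuous_id
      have := hcont.tendsto 1
      norm_num at this
      exact this.mono_left nhdsWithin_le_nhds
    · filter_upwards [self_mem_nhdsWithin] with x (hx : x < 1)
      simpa using hx
  have h2 : Tendsto (fun x : ℝ => (x - 1)⁻¹) (𝓝[<] (1:ℝ)) atBot := by
    have h3 := tendsto_neg_atTop_atBot.comp (tendsto_inv_nhdsGT_zero.comp h1)
    refine h3.congr (fun x => ?_)
    simp only [Function.comp_apply]
    rw [show (1:ℝ) - x = -(x - 1) by ring, inv_neg, neg_neg]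
  have key := hψ.add_atBot h2
  apply key.congr'
  have hev : ∀ᶠ x in 𝓝[<] (1:ℝ), x ∈ Ioo (r ^ 2) 1 := by
    have : ∀ᶠ x in 𝓝 (1:ℝ), x ∈ Ioi (r ^ 2) :=
      (isOpen_Ioi.eventually_mem (by simpa using (pow_lt_one₀ hr.le hr1 (two_ne_zero))))
    filter_upwards [eventually_nhdsWithin_of_eventually_nhds this, self_mem_nhdsWithin] with
      x hx1 (hx2 : x < 1)
    exact ⟨hx1, hx2⟩
  filter_upwards [hev] with x hx
  rw [thetaH_formula hr hr1 (mem_Udom_of_Ioo hr hr1 hx)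
    (by exact_mod_cast (show x ≠ 1 from ne_of_lt hx.2)), Complex.add_re]
  have : (1 / ((x:ℂ) - 1)).re = (x - 1)⁻¹ := by
    rw [show ((x:ℂ) - 1) = ((x - 1 : ℝ) : ℂ) by push_cast; ring, one_div, ← Complex.ofReal_inv,
      Complex.ofReal_re]
  rw [this]
  ring


include hr hr1 in
lemma tendsto_phi_rsq : Tendsto (fun x : ℝ => (thetaH r x).re) (𝓝[>] (r ^ 2 : ℝ)) atTop := by
  set c : ℂ := ((r ^ 2 : ℝ) : ℂ) with hc
  have h2 : (0:ℝ) < r ^ 2 := by positivity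
  have h21 : r ^ 2 < 1 := pow_lt_one₀ hr.le hr1 (two_ne_zero)
  -- the convergent part
  have hBc : ContinuousAt (fun z : ℂ => 1 / (z - 1) - c * z / (1 - c * z)
      + z * logDeriv (Pprod (Aseq r 1)) z) c := by
    apply ContinuousAt.add
    · apply ContinuousAt.sub
      · apply ContinuousAt.div continuousAt_const (continuousAt_id.sub continuousAt_const)
        simp only [Pi.sub_apply, Pi.mul_apply, id_eq]
        rw [hc, show ((r^2:ℝ):ℂ) - 1 = (((r^2 - 1 : ℝ)):ℂ) by push_cast; ring]
        exact Complex.ofReal_ne_zero.mpr (ne_of_lt (by linarith))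
      · apply ContinuousAt.div (continuousAt_const.mul continuousAt_id)
          (continuousAt_const.sub (continuousAt_const.mul continuousAt_id))
        simp only [Pi.sub_apply, Pi.mul_apply, id_eq]
        rw [hc, show (1:ℂ) - ((r^2:ℝ):ℂ) * ((r^2:ℝ):ℂ) = (((1 - (r^2)*(r^2) : ℝ)):ℂ) by
          push_cast; ring]
        have hpos : (0:ℝ) < 1 - r^2 * r^2 := by nlinarith
        exact Complex.ofReal_ne_zero.mpr (ne_of_gt hpos)
    · exact zlogDeriv_contAt (bpos hr hr1 1) (fun k => Aseq_pos hr 1 k)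
        (fun k => Aseq_le hr hr1 1 k) (Aseq_summable hr hr1 1) (rsq_mem_Udom1 hr hr1)
  have hB : Tendsto (fun x : ℝ => ((1 / ((x:ℂ) - 1) - c * x / (1 - c * x)
      + (x:ℂ) * logDeriv (Pprod (Aseq r 1)) x).re)) (𝓝[>] (r^2:ℝ))
      (𝓝 ((1 / (c - 1) - c * c / (1 - c * c) + c * logDeriv (Pprod (Aseq r 1)) c).re)) := by
    have hstep : ContinuousAt (fun x : ℝ => (1 / ((x:ℂ) - 1) - c * x / (1 - c * x)
        + (x:ℂ) * logDeriv (Pprod (Aseq r 1)) x)) (r^2:ℝ) :=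
      ContinuousAt.comp (f := fun x : ℝ => ((x : ℂ))) (x := (r^2 : ℝ)) hBc
        Complex.continuous_ofReal.continuousAt
    have hstep2 : ContinuousAt (fun x : ℝ => ((1 / ((x:ℂ) - 1) - c * x / (1 - c * x)
        + (x:ℂ) * logDeriv (Pprod (Aseq r 1)) x).re)) (r^2:ℝ) :=
      Complex.continuous_re.continuousAt.comp hstep
    exact hstep2.tendsto.mono_left nhdsWithin_le_nhds
  -- the divergent part
  have h1 : Tendsto (fun x : ℝ => x - r ^ 2) (𝓝[>] (r^2:ℝ)) (𝓝[>] (0:ℝ)) := by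
    rw [tendsto_nhdsWithin_iff]
    constructor
    · have hcont : Continuous fun x : ℝ => x - r ^ 2 := continuous_id.sub continuous_const
      have := hcont.tendsto (r ^ 2)
      norm_num at this
      exact this.mono_left nhdsWithin_le_nhds
    · filter_upwards [self_mem_nhdsWithin] with x (hx : r ^ 2 < x)
      simpa using hx
  have h2' : Tendsto (fun x : ℝ => r ^ 2 * (x - r ^ 2)⁻¹) (𝓝[>] (r^2:ℝ)) atTop :=
    (tendsto_inv_nhdsGT_zero.comp h1).const_mul_atTop h2
  have key := hB.add_atTop h2'
  apply key.congr'
  have hev : ∀ᶠ x in 𝓝[>] (r^2:ℝ), x ∈ Ioo (r ^ 2) 1 := by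
    have : ∀ᶠ x in 𝓝 (r^2:ℝ), x ∈ Iio (1:ℝ) := isOpen_Iio.eventually_mem h21
    filter_upwards [eventually_nhdsWithin_of_eventually_nhds this, self_mem_nhdsWithin] with
      x hx1 (hx2 : r ^ 2 < x)
    exact ⟨hx2, hx1⟩
  filter_upwards [hev] with x hx
  have hxne : (x : ℂ) ≠ 1 := by
    exact_mod_cast (show x ≠ 1 from ne_of_lt hx.2)
  rw [thetaH_formula2 hr hr1 (mem_Udom_of_Ioo hr hr1 hx) hxne]
  rw [show (1 / ((x:ℂ) - 1) - c * ↑x / (1 - c * ↑x) + c / (↑x - c)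
      + ↑x * logDeriv (Pprod (Aseq r 1)) ↑x)
      = (1 / ((x:ℂ) - 1) - c * ↑x / (1 - c * ↑x) + ↑x * logDeriv (Pprod (Aseq r 1)) ↑x)
        + c / (↑x - c) from by ring]
  rw [Complex.add_re]
  congr 1
  rw [hc, show ((x:ℂ) - ((r^2:ℝ):ℂ)) = (((x - r^2 : ℝ)):ℂ) by push_cast; ring,
    ← Complex.ofReal_div, Complex.ofReal_re]
  rw [div_eq_mul_inv]


end R

end ThetaFP

open ThetaFP

/-- For `s ∈ (-1,0)` there exists `m ∈ (-3,-2)` with `m = 2h(r^{-2(m+2)}) - 1 - s`. -/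
theorem exists_m_fixed_point (r : ℝ) (hr : 0 < r) (hr1 : r < 1)
    (s : ℝ) (hs : s ∈ Set.Ioo (-1 : ℝ) 0) :
    ∃ m ∈ Set.Ioo (-3 : ℝ) (-2),
      (m : ℂ) = 2 * thetaH r ((r ^ (-2 * (m + 2)) : ℝ) : ℂ) - 1 - (s : ℂ) := by
  have hrpow2 : r ^ ((2:ℝ)) = r ^ (2:ℕ) := by
    rw [show ((2:ℝ)) = ((2:ℕ):ℝ) by norm_num, Real.rpow_natCast]
  have hxm_cont : Continuous (fun m : ℝ => r ^ (-2 * (m + 2))) := by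
    have h : (fun m : ℝ => r ^ (-2 * (m + 2)))
        = fun m => Real.exp (Real.log r * (-2 * (m + 2))) :=
      funext fun m => Real.rpow_def_of_pos hr _
    rw [h]
    exact Real.continuous_exp.comp (continuous_const.mul
      (continuous_const.mul (continuous_id.add continuous_const)))
  have hgt : ∀ m : ℝ, -3 < m → r ^ 2 < r ^ (-2 * (m + 2)) := by
    intro m hm
    have := Real.rpow_lt_rpow_of_exponent_gt hr hr1 (show -2 * (m + 2) < 2 by linarith)
    rwa [hrpow2] at this
  have hlt1 : ∀ m : ℝ, m < -2 → r ^ (-2 * (m + 2)) < 1 := by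
    intro m hm
    exact Real.rpow_lt_one hr.le hr1 (by linarith)
  have hmem : ∀ m ∈ Ioo (-3:ℝ) (-2), r ^ (-2 * (m + 2)) ∈ Ioo (r ^ 2 : ℝ) 1 :=
    fun m hm => ⟨hgt m hm.1, hlt1 m hm.2⟩
  have htends1 : Tendsto (fun m : ℝ => r ^ (-2 * (m + 2))) (𝓝[>] (-3:ℝ))
      (𝓝[>] (r ^ 2 : ℝ)) := by
    rw [tendsto_nhdsWithin_iff]
    constructor
    · have h0 := hxm_cont.tendsto (-3)
      have hval : r ^ (-2 * ((-3:ℝ) + 2)) = r ^ (2:ℕ) := by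
        rw [show (-2 * ((-3:ℝ) + 2)) = (2:ℝ) by norm_num, hrpow2]
      rw [hval] at h0
      exact h0.mono_left nhdsWithin_le_nhds
    · filter_upwards [self_mem_nhdsWithin] with m (hm : -3 < m)
      exact hgt m hm
  have htends2 : Tendsto (fun m : ℝ => r ^ (-2 * (m + 2))) (𝓝[<] (-2:ℝ))
      (𝓝[<] (1:ℝ)) := by
    rw [tendsto_nhdsWithin_iff]
    constructor
    · have h0 := hxm_cont.tendsto (-2)
      have hval : r ^ (-2 * ((-2:ℝ) + 2)) = 1 := by
        rw [show (-2 * ((-2:ℝ) + 2)) = (0:ℝ) by norm_num, Real.rpow_zero]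
      rw [hval] at h0
      exact h0.mono_left nhdsWithin_le_nhds
    · filter_upwards [self_mem_nhdsWithin] with m (hm : m < -2)
      exact hlt1 m hm
  -- the function F
  set F : ℝ → ℝ := fun m => 2 * (thetaH r ((r ^ (-2 * (m + 2)) : ℝ) : ℂ)).re - 1 - s - m
    with hF
  have hFtop : Tendsto F (𝓝[>] (-3:ℝ)) atTop := by
    have h1 : Tendsto (fun m : ℝ => (thetaH r ((r ^ (-2 * (m + 2)) : ℝ) : ℂ)).re)
        (𝓝[>] (-3:ℝ)) atTop := (tendsto_phi_rsq hr hr1).comp htends1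
    have h2 := h1.const_mul_atTop (show (0:ℝ) < 2 by norm_num)
    have h3 : Tendsto (fun m : ℝ => -1 - s - m) (𝓝[>] (-3:ℝ)) (𝓝 (-1 - s - (-3))) :=
      (((continuous_const.sub continuous_id)).tendsto (-3)).mono_left nhdsWithin_le_nhds
    have := h3.add_atTop h2
    apply this.congr
    intro m
    rw [hF]
    ring
  have hFbot : Tendsto F (𝓝[<] (-2:ℝ)) atBot := by
    have h1 : Tendsto (fun m : ℝ => (thetaH r ((r ^ (-2 * (m + 2)) : ℝ) : ℂ)).re)
        (𝓝[<] (-2:ℝ)) atBot := (tendsto_phi_one hr hr1).comp htends2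
    have h2 := h1.const_mul_atBot (show (0:ℝ) < 2 by norm_num)
    have h3 : Tendsto (fun m : ℝ => -1 - s - m) (𝓝[<] (-2:ℝ)) (𝓝 (-1 - s - (-2))) :=
      (((continuous_const.sub continuous_id)).tendsto (-2)).mono_left nhdsWithin_le_nhds
    have := h3.add_atBot h2
    apply this.congr
    intro m
    rw [hF]
    ring
  -- choose points a < b with F a > 0 > F b
  have hev_a : ∀ᶠ m in 𝓝[>] (-3:ℝ), 0 < F m ∧ m < -2 ∧ -3 < m := by
    have e1 := hFtop.eventually_gt_atTop 0
    have e2 : ∀ᶠ m in 𝓝 (-3:ℝ), m < -2 := eventually_lt_nhds (by norm_num)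
    filter_upwards [e1, eventually_nhdsWithin_of_eventually_nhds e2, self_mem_nhdsWithin] with
      m h1 h2 (h3 : -3 < m)
    exact ⟨h1, h2, h3⟩
  obtain ⟨a, hFa, ha2, ha3⟩ := hev_a.exists
  have hev_b : ∀ᶠ m in 𝓝[<] (-2:ℝ), F m < 0 ∧ a < m ∧ m < -2 := by
    have e1 := hFbot.eventually_lt_atBot 0
    have e2 : ∀ᶠ m in 𝓝 (-2:ℝ), a < m := eventually_gt_nhds ha2
    filter_upwards [e1, eventually_nhdsWithin_of_eventually_nhds e2, self_mem_nhdsWithin] with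
      m h1 h2 (h3 : m < -2)
    exact ⟨h1, h2, h3⟩
  obtain ⟨b, hFb, hab, hb2⟩ := hev_b.exists
  have hIccIoo : Icc a b ⊆ Ioo (-3:ℝ) (-2) := fun x hx =>
    ⟨lt_of_lt_of_le ha3 hx.1, lt_of_le_of_lt hx.2 hb2⟩
  have hcontF : ContinuousOn F (Ioo (-3:ℝ) (-2)) := by
    have hφx : ContinuousOn (fun m : ℝ => (thetaH r ((r ^ (-2 * (m + 2)) : ℝ) : ℂ)).re)
        (Ioo (-3:ℝ) (-2)) :=
      (phi_contOn hr hr1).comp hxm_cont.continuousOn (fun m hm => hmem m hm)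
    exact ((((continuousOn_const.mul hφx)).sub continuousOn_const).sub
      continuousOn_const).sub continuousOn_id
  have hIVT := intermediate_value_Icc' (le_of_lt hab) (hcontF.mono hIccIoo)
  have h0mem : (0:ℝ) ∈ Icc (F b) (F a) := ⟨le_of_lt hFb, le_of_lt hFa⟩
  obtain ⟨m₀, hm₀, hFm₀⟩ := hIVT h0mem
  have hm₀' : m₀ ∈ Ioo (-3:ℝ) (-2) := hIccIoo hm₀
  refine ⟨m₀, hm₀', ?_⟩
  have hx0 : r ^ (-2 * (m₀ + 2)) ∈ Ioo (r ^ 2 : ℝ) 1 := hmem m₀ hm₀'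
  have hth := thetaH_ofReal hr hr1 hx0
  have harith : m₀ = 2 * (thetaH r ((r ^ (-2 * (m₀ + 2)) : ℝ) : ℂ)).re - 1 - s := by
    have : F m₀ = 0 := hFm₀
    rw [hF] at this
    simp only at this
    linarith
  rw [hth]
  conv_lhs => rw [harith]
  push_cast
  ring
end
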